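/- Let n and m be nonzero integers and let p be a prime with ν_p(n) ≠ ν_p(m). Then for every finite group Q and every group homomorphism φ : BS(n,m) → Q, the p-adic valuation of the order of φ(a) is at most min(ν_p(n), ν_p(m)), where a is the first generator of BS(n,m). -/

import Mathlib

/-- The single relator `a^n t a^{-m} t⁻¹` of the Baumslag–Solitar group `BS(n,m)`,
with generator `0 = a` and `1 = t`. -/
def BSRel (n m : ℤ) : Set (FreeGroup (Fin 2)) :=
  {FreeGroup.of 0 ^ n * FreeGroup.of 1 * FreeGroup.of 0 ^ (-m) * (FreeGroup.of 1)⁻¹}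

/-- The Baumslag–Solitar group `BS(n,m) = ⟨a, t ∣ a^n = t a^m t⁻¹⟩`. -/
abbrev BS (n m : ℤ) := PresentedGroup (BSRel n m)

/-- The first generator `a` of `BS(n,m)`. -/
abbrev BS.a (n m : ℤ) : BS n m := PresentedGroup.of 0

private lemma orderOf_zpow_natAbs {G : Type*} [Group G] (x : G) (n : ℤ) :
    orderOf (x ^ n) = orderOf (x ^ n.natAbs) := by
  rcases Int.natAbs_eq n with h | h
  · conv_lhs => rw [h, zpow_natCast]
  · conv_lhs => rw [h, zpow_neg, zpow_natCast]
    rw [orderOf_inv]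

private lemma gcd_val_aux {p N c : ℕ} (hp : p.Prime) (hc : c ≠ 0)
    (h : p ^ (padicValNat p c + 1) ∣ N.gcd c) : False := by
  haveI : Fact p.Prime := ⟨hp⟩
  have hdc : p ^ (padicValNat p c + 1) ∣ c := h.trans (Nat.gcd_dvd_right _ _)
  have := (padicValNat_dvd_iff_le hc).mp hdc
  omega

private lemma val_le_of_gcd_eq {p N c d : ℕ} (hp : p.Prime) (hN : N ≠ 0)
    (hc : c ≠ 0) (hd : d ≠ 0) (h : N.gcd c = N.gcd d)
    (hlt : padicValNat p c < padicValNat p d) :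
    padicValNat p N ≤ padicValNat p c := by
  haveI : Fact p.Prime := ⟨hp⟩
  by_contra h'
  push_neg at h'
  have h1 : p ^ (padicValNat p c + 1) ∣ N := (padicValNat_dvd_iff_le hN).mpr h'
  have h2 : p ^ (padicValNat p c + 1) ∣ d :=
    (padicValNat_dvd_iff_le hd).mpr (by omega)
  exact gcd_val_aux hp hc (h ▸ Nat.dvd_gcd h1 h2)

/-- Converse part of the paper's Proposition 3.2 (Closure), loop case: if `p` is a prime
with `ν_p(n) ≠ ν_p(m)`, then in every finite quotient of `BS(n,m)` the `p`-adic valuation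
of the order of the image of `a` is at most `min (ν_p(n)) (ν_p(m))`. -/
theorem BS_finite_quotient_order_bounded
    (n m : ℤ) (hn : n ≠ 0) (hm : m ≠ 0) (p : ℕ) (hp : p.Prime)
    (hval : padicValNat p n.natAbs ≠ padicValNat p m.natAbs)
    (Q : Type) [Group Q] [Finite Q] (φ : BS n m →* Q) :
    padicValNat p (orderOf (φ (BS.a n m))) ≤
      min (padicValNat p n.natAbs) (padicValNat p m.natAbs) := by
  -- the relator maps to 1
  have hrel : ((QuotientGroup.mk (FreeGroup.of 0 ^ n * FreeGroup.of 1 * FreeGroup.of 0 ^ (-m) *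
      (FreeGroup.of 1)⁻¹) : BS n m)) = 1 := by
    rw [QuotientGroup.eq_one_iff]
    exact Subgroup.subset_normalClosure (by simp [BSRel])
  set x : Q := φ (BS.a n m) with hx
  set y : Q := φ (QuotientGroup.mk (FreeGroup.of 1)) with hy
  have key : x ^ n * y * x ^ (-m) * y⁻¹ = 1 := by
    have := congrArg φ (show PresentedGroup.mk (BSRel n m) (FreeGroup.of 0 ^ n * FreeGroup.of 1 *
      FreeGroup.of 0 ^ (-m) * (FreeGroup.of 1)⁻¹) = 1 from hrel)
    simp only [map_mul, map_zpow, map_inv, map_one] at this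
    exact this
  have hconj : x ^ n = y * x ^ m * y⁻¹ := by
    have h1 : x ^ n * (y * x ^ m * y⁻¹)⁻¹ = 1 := by
      rw [← key]; group
    exact mul_inv_eq_one.mp h1
  -- orders
  have horder : orderOf (x ^ n.natAbs) = orderOf (x ^ m.natAbs) := by
    have h2 : orderOf (y * x ^ (m : ℤ) * y⁻¹) = orderOf (x ^ (m : ℤ)) := by
      have := orderOf_injective (MulAut.conj y).toMonoidHom (MulEquiv.injective _) (x ^ (m : ℤ))
      simpa [MulAut.conj_apply, mul_assoc] using this
    calc orderOf (x ^ n.natAbs) = orderOf (x ^ (n : ℤ)) := (orderOf_zpow_natAbs x n).symm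
      _ = orderOf (x ^ (m : ℤ)) := by rw [hconj, h2]
      _ = orderOf (x ^ m.natAbs) := orderOf_zpow_natAbs x m
  rw [orderOf_pow, orderOf_pow] at horder
  set N := orderOf x with hN
  have hNpos : 0 < N := orderOf_pos x
  have hgcd : N.gcd n.natAbs = N.gcd m.natAbs := by
    have g1 : N.gcd n.natAbs ∣ N := Nat.gcd_dvd_left _ _
    have g2 : N.gcd m.natAbs ∣ N := Nat.gcd_dvd_left _ _
    have := Nat.div_div_self g1 hNpos.ne'
    rw [horder, Nat.div_div_self g2 hNpos.ne'] at this
    exact this.symm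
  have hnA : n.natAbs ≠ 0 := Int.natAbs_ne_zero.mpr hn
  have hmA : m.natAbs ≠ 0 := Int.natAbs_ne_zero.mpr hm
  rcases lt_or_gt_of_ne hval with hlt | hlt
  · have := val_le_of_gcd_eq hp hNpos.ne' hnA hmA hgcd hlt
    omega
  · have := val_le_of_gcd_eq hp hNpos.ne' hmA hnA hgcd.symm hlt
    omega
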